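/- Let X and Y be topological spaces, (J_n)_{n∈ℕ} a sequence of functions from X × Y to [0,+∞], J_∞ : X × Y → [0,+∞], (E_n)_{n∈ℕ} a sequence of subsets of X × Y, and E_∞ ⊆ X × Y. Assume conditions (A) and (B): for every (x,y) ∈ X × Y, (A) the infimum over all sequences xⁿ → x of ( the supremum over all sequences yⁿ → y of limsup_{n→∞} J_n(xⁿ,yⁿ) ) and the infimum over all sequences xⁿ → x of ( the infimum over all sequences yⁿ → y of liminf_{n→∞} J_n(xⁿ,yⁿ) ) both equal J_∞(x,y); (B) the supremum over all sequences xⁿ → x of ( the infimum over all sequences yⁿ → y of limsup_{n→∞} 1_{E_n}(xⁿ,yⁿ) ) and the infimum over all sequences xⁿ → x of ( the infimum over all sequences yⁿ → y of liminf_{n→∞} 1_{E_n}(xⁿ,yⁿ) ) both equal 1_{E_∞}(x,y). Suppose that for every n, (x_n, y_n) ∈ X × Y satisfies (J_n + 1_{E_n})(x_n, y_n) = inf_{X×Y} (J_n + 1_{E_n}), and that x_n → x_∞ in X and y_n → y_∞ in Y. Then (x_∞, y_∞) is a minimizer of J_∞ + 1_{E_∞} over X × Y, and moreover (J_∞ +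 1_{E_∞})(x_∞, y_∞) = inf_{X×Y} (J_∞ + 1_{E_∞}) = lim_{n→∞} inf_{X×Y} (J_n + 1_{E_n}). -/
import Mathlib


open Filter Topology
open scoped ENNReal

open Classical in
/-- The `[0, +∞]`-valued indicator of a set: `0` on the set and `+∞` off it. -/
noncomputable def eIndicator {Z : Type*} (E : Set Z) (z : Z) : ℝ≥0∞ :=
  if z ∈ E then 0 else ⊤

private lemma ennreal_le_liminf_add (u v : ℕ → ℝ≥0∞) :
    liminf u atTop + liminf v atTop ≤ liminf (fun n => u n + v n) atTop := by
  rw [liminf_eq_iSup_iInf_of_nat (u := u), liminf_eq_iSup_iInf_of_nat (u := v),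
    liminf_eq_iSup_iInf_of_nat (u := fun n => u n + v n)]
  have hmono : ∀ w : ℕ → ℝ≥0∞, Monotone fun n => ⨅ i ≥ n, w i := by
    intro w n m hnm
    exact le_iInf₂ fun k hk => iInf₂_le k (hnm.trans hk)
  rw [ENNReal.iSup_add_iSup_of_monotone (hmono u) (hmono v)]
  refine iSup_mono fun n => le_iInf₂ fun k hk => ?_
  exact add_le_add (iInf₂_le k hk) (iInf₂_le k hk)

/-- convergence of minimizers for `J n + 1_{E n}`.
Under the sequential Γ-convergence hypotheses (A) and (B), if `(x n, y n)` are
minimizers of `J n + 1_{E n}` and `x n → x∞`, `y n → y∞`, then `(x∞, y∞)` is a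
minimizer of `J∞ + 1_{E∞}`, and the sequence of infima converges to the infimum
of `J∞ + 1_{E∞}`. -/
theorem minimizers_converge_of_gammaSeq {X Y : Type*}
    [TopologicalSpace X] [TopologicalSpace Y]
    (J : ℕ → X × Y → ℝ≥0∞) (Jinf : X × Y → ℝ≥0∞)
    (E : ℕ → Set (X × Y)) (Einf : Set (X × Y))
    (hA1 : ∀ (x : X) (y : Y),
      (⨅ (u : ℕ → X) (_ : Tendsto u atTop (𝓝 x)),
        ⨆ (v : ℕ → Y) (_ : Tendsto v atTop (𝓝 y)),
          limsup (fun n => J n (u n, v n)) atTop) = Jinf (x, y))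
    (hA2 : ∀ (x : X) (y : Y),
      (⨅ (u : ℕ → X) (_ : Tendsto u atTop (𝓝 x)),
        ⨅ (v : ℕ → Y) (_ : Tendsto v atTop (𝓝 y)),
          liminf (fun n => J n (u n, v n)) atTop) = Jinf (x, y))
    (hB1 : ∀ (x : X) (y : Y),
      (⨆ (u : ℕ → X) (_ : Tendsto u atTop (𝓝 x)),
        ⨅ (v : ℕ → Y) (_ : Tendsto v atTop (𝓝 y)),
          limsup (fun n => eIndicator (E n) (u n, v n)) atTop) = eIndicator Einf (x, y))
    (hB2 : ∀ (x : X) (y : Y),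
      (⨅ (u : ℕ → X) (_ : Tendsto u atTop (𝓝 x)),
        ⨅ (v : ℕ → Y) (_ : Tendsto v atTop (𝓝 y)),
          liminf (fun n => eIndicator (E n) (u n, v n)) atTop) = eIndicator Einf (x, y))
    (xs : ℕ → X) (ys : ℕ → Y) (xinf : X) (yinf : Y)
    (hmin : ∀ n : ℕ, J n (xs n, ys n) + eIndicator (E n) (xs n, ys n)
      = ⨅ z : X × Y, (J n z + eIndicator (E n) z))
    (hx : Tendsto xs atTop (𝓝 xinf)) (hy : Tendsto ys atTop (𝓝 yinf)) :
    (Jinf (xinf, yinf) + eIndicator Einf (xinf, yinf)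
        = ⨅ z : X × Y, (Jinf z + eIndicator Einf z)) ∧
    Tendsto (fun n => ⨅ z : X × Y, (J n z + eIndicator (E n) z)) atTop
      (𝓝 (⨅ z : X × Y, (Jinf z + eIndicator Einf z))) := by
  classical
  set m : ℕ → ℝ≥0∞ := fun n => ⨅ z : X × Y, (J n z + eIndicator (E n) z) with hm
  set F : X × Y → ℝ≥0∞ := fun z => Jinf z + eIndicator Einf z with hF
  set M : ℝ≥0∞ := ⨅ z : X × Y, F z with hM
  -- Step 1: F (xinf, yinf) ≤ liminf m
  have step1 : F (xinf, yinf) ≤ liminf m atTop := by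
    have hJ : Jinf (xinf, yinf) ≤ liminf (fun n => J n (xs n, ys n)) atTop := by
      rw [← hA2 xinf yinf]
      exact iInf₂_le_of_le xs hx (iInf₂_le ys hy)
    have hE : eIndicator Einf (xinf, yinf)
        ≤ liminf (fun n => eIndicator (E n) (xs n, ys n)) atTop := by
      rw [← hB2 xinf yinf]
      exact iInf₂_le_of_le xs hx (iInf₂_le ys hy)
    calc F (xinf, yinf) ≤ liminf (fun n => J n (xs n, ys n)) atTop
          + liminf (fun n => eIndicator (E n) (xs n, ys n)) atTop := add_le_add hJ hE
      _ ≤ liminf (fun n => J n (xs n, ys n) + eIndicator (E n) (xs n, ys n)) atTop := by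
          exact ennreal_le_liminf_add _ _
      _ = liminf m atTop := by
          refine liminf_congr (Eventually.of_forall fun n => ?_)
          exact hmin n
  -- Step 2: limsup m ≤ F z for all z
  have step2 : ∀ z : X × Y, limsup m atTop ≤ F z := by
    rintro ⟨x, y⟩
    by_cases hz : (x, y) ∈ Einf
    · have hEz : eIndicator Einf (x, y) = 0 := if_pos hz
      have hFz : F (x, y) = Jinf (x, y) := by simp [hF, hEz]
      rw [hFz]
      refine ENNReal.le_of_forall_pos_le_add fun ε hε hJlt => ?_
      -- get u with sup over v of limsup J < Jinf (x,y) + ε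
      have hlt : (⨅ (u : ℕ → X) (_ : Tendsto u atTop (𝓝 x)),
          ⨆ (v : ℕ → Y) (_ : Tendsto v atTop (𝓝 y)),
            limsup (fun n => J n (u n, v n)) atTop) < Jinf (x, y) + ε := by
        rw [hA1 x y]
        exact ENNReal.lt_add_right hJlt.ne (by exact_mod_cast hε.ne')
      rw [iInf_lt_iff] at hlt
      obtain ⟨u, hlt⟩ := hlt
      rw [iInf_lt_iff] at hlt
      obtain ⟨hu, hlt⟩ := hlt
      -- get v with limsup eIndicator (E n) (u n, v n) < 1
      have hB : (⨅ (v : ℕ → Y) (_ : Tendsto v atTop (𝓝 y)),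
          limsup (fun n => eIndicator (E n) (u n, v n)) atTop) < 1 := by
        have h1 : (⨅ (v : ℕ → Y) (_ : Tendsto v atTop (𝓝 y)),
            limsup (fun n => eIndicator (E n) (u n, v n)) atTop)
            ≤ eIndicator Einf (x, y) := by
          rw [← hB1 x y]
          exact le_iSup₂ (f := fun (u' : ℕ → X) (_ : Tendsto u' atTop (𝓝 x)) =>
            ⨅ (v : ℕ → Y) (_ : Tendsto v atTop (𝓝 y)),
              limsup (fun n => eIndicator (E n) (u' n, v n)) atTop) u hu
        calc _ ≤ eIndicator Einf (x, y) := h1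
          _ = 0 := hEz
          _ < 1 := zero_lt_one
      rw [iInf_lt_iff] at hB
      obtain ⟨v, hB⟩ := hB
      rw [iInf_lt_iff] at hB
      obtain ⟨hv, hB⟩ := hB
      have hev : ∀ᶠ n in atTop, (u n, v n) ∈ E n := by
        filter_upwards [eventually_lt_of_limsup_lt hB] with n hn
        by_contra hnot
        simp [eIndicator, hnot] at hn
      -- bound limsup m
      have h2 : limsup m atTop ≤ limsup (fun n => J n (u n, v n)) atTop := by
        have : limsup m atTop ≤ limsup (fun n => J n (u n, v n)
            + eIndicator (E n) (u n, v n)) atTop :=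
          limsup_le_limsup (Eventually.of_forall fun n => iInf_le _ (u n, v n))
        refine this.trans (le_of_eq (limsup_congr ?_))
        filter_upwards [hev] with n hn
        simp [eIndicator, hn]
      refine h2.trans ?_
      have h3 : limsup (fun n => J n (u n, v n)) atTop
          ≤ ⨆ (v' : ℕ → Y) (_ : Tendsto v' atTop (𝓝 y)),
            limsup (fun n => J n (u n, v' n)) atTop :=
        le_iSup₂ (f := fun (v' : ℕ → Y) (_ : Tendsto v' atTop (𝓝 y)) =>
          limsup (fun n => J n (u n, v' n)) atTop) v hv
      exact h3.trans hlt.le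
    · have : F (x, y) = ⊤ := by simp [hF, eIndicator, hz]
      simp [this]
  -- combine
  have hLM : limsup m atTop ≤ M := le_iInf step2
  have hMF : M ≤ F (xinf, yinf) := iInf_le _ _
  have hll : liminf m atTop ≤ limsup m atTop := liminf_le_limsup
  refine ⟨le_antisymm (step1.trans (hll.trans hLM)) hMF, ?_⟩
  exact tendsto_of_le_liminf_of_limsup_le (hMF.trans step1) hLM
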